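/- For all 0 ≤ δ ≤ 1 and all ρ with |ρ| ≤ 1, K(δρ) ≤ ρ²·K(δ), where K(δ) = ((1+δ)·log₂(1+δ) + (1−δ)·log₂(1−δ))/2. -/

import Mathlib

open Real


/-- The binary information function `K(δ) = ((1+δ)·log₂(1+δ) + (1−δ)·log₂(1−δ))/2`. -/
noncomputable def binK (δ : ℝ) : ℝ :=
  ((1 + δ) * Real.logb 2 (1 + δ) + (1 - δ) * Real.logb 2 (1 - δ)) / 2

noncomputable def binG (x : ℝ) : ℝ :=
  (1 + x) * Real.log (1 + x) + (1 - x) * Real.log (1 - x)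

lemma binK_eq (x : ℝ) : binK x = binG x / (2 * Real.log 2) := by
  have h2 : Real.log 2 ≠ 0 := ne_of_gt (Real.log_pos one_lt_two)
  unfold binK binG Real.logb
  field_simp

lemma continuous_binK : Continuous binK := by
  have : binK = fun x => ((1 + x) * Real.log (1 + x) + (1 - x) * Real.log (1 - x))
      / (2 * Real.log 2) := funext fun x => binK_eq x
  rw [this]
  exact (((Real.continuous_mul_log.comp (by continuity)).add
    (Real.continuous_mul_log.comp (by continuity)))).div_const _

lemma hasSum_binG {x : ℝ} (hx : |x| < 1) :
    HasSum (fun m : ℕ => x ^ (2 * m + 2) / ((2 * m + 1) * (m + 1))) (binG x) := by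
  have h1 : HasSum (fun n : ℕ => x ^ (n + 1) / (n + 1)) (-Real.log (1 - x)) :=
    Real.hasSum_pow_div_log_of_abs_lt_one hx
  have h2 : HasSum (fun n : ℕ => (-x) ^ (n + 1) / (n + 1)) (-Real.log (1 + x)) := by
    have := Real.hasSum_pow_div_log_of_abs_lt_one (x := -x) (by rwa [abs_neg])
    simpa using this
  set t : ℕ → ℝ := fun n => -(1 + x) * ((-x) ^ (n + 1) / (n + 1))
      + -(1 - x) * (x ^ (n + 1) / (n + 1)) with ht
  have hT : HasSum t (binG x) := by
    have h := (h2.mul_left (-(1 + x))).add (h1.mul_left (-(1 - x)))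
    have e : binG x = -(1 + x) * -Real.log (1 + x) + -(1 - x) * -Real.log (1 - x) := by
      unfold binG; ring
    rw [e]; exact h
  have hx2 : x ^ 2 < 1 := by
    rw [← sq_abs]; exact pow_lt_one₀ (abs_nonneg x) hx two_ne_zero
  have hgeom : Summable fun m : ℕ => 2 * (x ^ 2) ^ m :=
    (summable_geometric_of_lt_one (by positivity) hx2).mul_left 2
  have hte : ∀ m : ℕ, t (2 * m) = 2 * x ^ (2 * m + 2) / (2 * m + 1) := by
    intro m
    have hodd : (-x) ^ (2 * m + 1) = -(x ^ (2 * m + 1)) := Odd.neg_pow ⟨m, by ring⟩ x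
    have he1 : t (2 * m) = -(1 + x) * ((-x) ^ (2 * m + 1) / (2 * m + 1))
        + -(1 - x) * (x ^ (2 * m + 1) / (2 * m + 1)) := by
      simp only [ht]; push_cast; ring_nf
    rw [he1, hodd]
    have hne : (2 * (m : ℝ) + 1) ≠ 0 := by positivity
    field_simp
    ring
  have hto : ∀ m : ℕ, t (2 * m + 1) = -(x ^ (2 * m + 2) / (m + 1)) := by
    intro m
    have heven : (-x) ^ (2 * m + 2) = x ^ (2 * m + 2) := Even.neg_pow ⟨m + 1, by ring⟩ x
    have he1 : t (2 * m + 1) = -(1 + x) * ((-x) ^ (2 * m + 2) / (2 * m + 2))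
        + -(1 - x) * (x ^ (2 * m + 2) / (2 * m + 2)) := by
      simp only [ht]; push_cast; ring_nf
    rw [he1, heven]
    have hne : ((m : ℝ) + 1) ≠ 0 := by positivity
    field_simp
    ring
  have hxpow : ∀ m : ℕ, |x| ^ (2 * m + 2) ≤ (x ^ 2) ^ m := by
    intro m
    have h' : |x| ^ (2 * m + 2) = (x ^ 2) ^ m * |x| ^ 2 := by
      rw [← sq_abs, ← pow_mul, ← pow_add]
    rw [h']
    calc (x ^ 2) ^ m * |x| ^ 2 ≤ (x ^ 2) ^ m * 1 := by
          apply mul_le_mul_of_nonneg_left _ (by positivity)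
          rw [sq_abs]; exact le_of_lt hx2
      _ = (x ^ 2) ^ m := by ring
  have he : Summable fun m : ℕ => t (2 * m) := by
    apply Summable.of_norm_bounded hgeom
    intro m
    rw [hte m, Real.norm_eq_abs, abs_div, abs_mul, abs_pow]
    have h2' : |2 * (m : ℝ) + 1| = 2 * m + 1 := abs_of_pos (by positivity)
    have hm : (0:ℝ) ≤ m := Nat.cast_nonneg m
    calc |(2:ℝ)| * |x| ^ (2 * m + 2) / |2 * (m : ℝ) + 1|
        ≤ |(2:ℝ)| * |x| ^ (2 * m + 2) / 1 := by
          apply div_le_div_of_nonneg_left (by positivity) (by norm_num) _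
          rw [h2']; linarith
      _ = 2 * |x| ^ (2 * m + 2) := by norm_num
      _ ≤ 2 * (x ^ 2) ^ m := by linarith [hxpow m]
  have ho : Summable fun m : ℕ => t (2 * m + 1) := by
    apply Summable.of_norm_bounded hgeom
    intro m
    rw [hto m, norm_neg, Real.norm_eq_abs, abs_div, abs_pow]
    have h2' : |(m : ℝ) + 1| = m + 1 := abs_of_pos (by positivity)
    have hm : (0:ℝ) ≤ m := Nat.cast_nonneg m
    calc |x| ^ (2 * m + 2) / |(m : ℝ) + 1| ≤ |x| ^ (2 * m + 2) / 1 := by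
          apply div_le_div_of_nonneg_left (by positivity) (by norm_num) _
          rw [h2']; linarith
      _ = |x| ^ (2 * m + 2) := by norm_num
      _ ≤ (x ^ 2) ^ m := hxpow m
      _ ≤ 2 * (x ^ 2) ^ m := by nlinarith [pow_nonneg (sq_nonneg x) m]
  have hsplit : HasSum t ((∑' m, t (2 * m)) + ∑' m, t (2 * m + 1)) :=
    HasSum.even_add_odd he.hasSum ho.hasSum
  have hval : (∑' m, t (2 * m)) + ∑' m, t (2 * m + 1) = binG x := hsplit.unique hT
  have hcomb : HasSum (fun m => t (2 * m) + t (2 * m + 1)) (binG x) := by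
    rw [← hval]; exact he.hasSum.add ho.hasSum
  convert hcomb using 2 with m
  rw [hte m, hto m]
  have hne1 : (2 * (m : ℝ) + 1) ≠ 0 := by positivity
  have hne2 : ((m : ℝ) + 1) ≠ 0 := by positivity
  field_simp
  ring


lemma binG_contraction_lt {δ ρ : ℝ} (h0 : 0 ≤ δ) (h1 : δ < 1) (hρ : |ρ| ≤ 1) :
    binG (δ * ρ) ≤ ρ ^ 2 * binG δ := by
  have hδρ : |δ * ρ| < 1 := by
    rw [abs_mul, abs_of_nonneg h0]
    calc δ * |ρ| ≤ δ * 1 := mul_le_mul_of_nonneg_left hρ h0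
      _ < 1 := by linarith
  have hδ : |δ| < 1 := by rwa [abs_of_nonneg h0]
  have hA := hasSum_binG hδρ
  have hB := (hasSum_binG hδ).mul_left (ρ ^ 2)
  have hρ2 : ρ ^ 2 ≤ 1 := by
    rw [← sq_abs]; exact pow_le_one₀ (abs_nonneg ρ) hρ
  refine hasSum_le ?_ hA hB
  intro m
  have hd : (0 : ℝ) < (2 * m + 1) * (m + 1) := by positivity
  have hρpow : ρ ^ (2 * m + 2) ≤ ρ ^ 2 := by
    have h' : ρ ^ (2 * m + 2) = (ρ ^ 2) ^ (m + 1) := by rw [← pow_mul]; ring_nf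
    rw [h']
    calc (ρ ^ 2) ^ (m + 1) ≤ (ρ ^ 2) ^ 1 :=
          pow_le_pow_of_le_one (sq_nonneg ρ) hρ2 (by omega)
      _ = ρ ^ 2 := pow_one _
  calc (δ * ρ) ^ (2 * m + 2) / ((2 * m + 1) * (m + 1))
      = δ ^ (2 * m + 2) * ρ ^ (2 * m + 2) / ((2 * m + 1) * (m + 1)) := by rw [mul_pow]
    _ ≤ δ ^ (2 * m + 2) * ρ ^ 2 / ((2 * m + 1) * (m + 1)) := by
        apply div_le_div_of_nonneg_right _ hd.le
        exact mul_le_mul_of_nonneg_left hρpow (pow_nonneg h0 _)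
    _ = ρ ^ 2 * (δ ^ (2 * m + 2) / ((2 * m + 1) * (m + 1))) := by ring

theorem binK_contraction (δ ρ : ℝ) (h0 : 0 ≤ δ) (h1 : δ ≤ 1) (hρ : |ρ| ≤ 1) :
    binK (δ * ρ) ≤ ρ ^ 2 * binK δ := by
  have hlog : (0:ℝ) < 2 * Real.log 2 := by
    have := Real.log_pos one_lt_two; linarith
  have key : Set.Icc (0:ℝ) 1 ⊆ {x : ℝ | binK (x * ρ) ≤ ρ ^ 2 * binK x} := by
    rw [← closure_Ico (zero_ne_one)]
    apply closure_minimal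
    · intro x hx
      simp only [Set.mem_setOf_eq, binK_eq]
      rw [← mul_div_assoc]
      exact div_le_div_of_nonneg_right (binG_contraction_lt hx.1 hx.2 hρ) hlog.le
    · exact isClosed_le (continuous_binK.comp (continuous_id.mul continuous_const))
        (continuous_const.mul continuous_binK)
  exact key ⟨h0, h1⟩
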